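/- Let w : ℝ³ → ℝ be C² with w_x ≠ 0, and a, b distinct nonzero constants. Define the 5×5 antisymmetric matrices P₀ and P₁ on coordinates (x,y,z,p₀,p₁) by P₀ with nonzero entries P₀^{14} = −w_z/w_x, P₀^{15} = −w_y/w_x, P₀^{25} = 1, P₀^{34} = 1 (antisymmetrized), and P₁ with nonzero entries P₁^{25} = b, P₁^{34} = a (antisymmetrized). Then P₀ + λP₁ defines a Poisson bracket (i.e. satisfies the Jacobi identity) for all λ ∈ ℝ if and only if w satisfies the dispersionless Hirota equation (b−a)w_x w_{yz} + a w_y w_{zx} − b w_z w_{xy} = 0. -/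

import Mathlib

noncomputable section

abbrev Pt3 := Fin 3 → ℝ
abbrev Pt5 := Fin 5 → ℝ

/-- Partial derivative on ℝ³. -/
def pd (j : Fin 3) (f : Pt3 → ℝ) (p : Pt3) : ℝ :=
  fderiv ℝ f p (Pi.single j 1)

/-- Partial derivative on ℝ⁵. -/
def pd5 (j : Fin 5) (f : Pt5 → ℝ) (q : Pt5) : ℝ :=
  fderiv ℝ f q (Pi.single j 1)

/-- Projection to the base ℝ³ (coordinates x,y,z). -/
def base (q : Pt5) : Pt3 := ![q 0, q 1, q 2]

/-- The dispersionless Hirota expression (b−a)w_x w_{yz} + a w_y w_{zx} − b w_z w_{xy}. -/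
def hirota (a b : ℝ) (w : Pt3 → ℝ) (p : Pt3) : ℝ :=
  (b - a) * pd 0 w p * pd 1 (fun q => pd 2 w q) p
    + a * pd 1 w p * pd 2 (fun q => pd 0 w q) p
    - b * pd 2 w p * pd 0 (fun q => pd 1 w q) p

/-- The Poisson matrix P₀ on ℝ⁵ with coordinates (x,y,z,p₀,p₁). -/
def P0 (w : Pt3 → ℝ) (q : Pt5) : Matrix (Fin 5) (Fin 5) ℝ :=
  !![0, 0, 0, -(pd 2 w (base q) / pd 0 w (base q)), -(pd 1 w (base q) / pd 0 w (base q));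
     0, 0, 0, 0, 1;
     0, 0, 0, 1, 0;
     pd 2 w (base q) / pd 0 w (base q), 0, -1, 0, 0;
     pd 1 w (base q) / pd 0 w (base q), -1, 0, 0, 0]

/-- The constant Poisson matrix P₁. -/
def P1 (a b : ℝ) : Matrix (Fin 5) (Fin 5) ℝ :=
  !![0, 0, 0, 0, 0;
     0, 0, 0, 0, b;
     0, 0, 0, a, 0;
     0, 0, -a, 0, 0;
     0, -b, 0, 0, 0]

/-- The Jacobi expression Σ_δ (P^{δγ}∂_δP^{αβ} + P^{δβ}∂_δP^{γα} + P^{δα}∂_δP^{βγ}). -/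
def jacobi (P : Pt5 → Matrix (Fin 5) (Fin 5) ℝ) (q : Pt5) (α β γ : Fin 5) : ℝ :=
  ∑ δ : Fin 5, (P q δ γ * pd5 δ (fun r => P r α β) q
    + P q δ β * pd5 δ (fun r => P r γ α) q
    + P q δ α * pd5 δ (fun r => P r β γ) q)

/-! ### Auxiliary machinery -/

/-- `base` as a continuous linear map. -/
def baseL : Pt5 →L[ℝ] Pt3 :=
  ContinuousLinearMap.pi ![ContinuousLinearMap.proj 0, ContinuousLinearMap.proj 1,
    ContinuousLinearMap.proj 2]

lemma baseL_apply (q : Pt5) : baseL q = base q := by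
  funext i
  fin_cases i <;> rfl

lemma pd5_const (j : Fin 5) (c : ℝ) (q : Pt5) : pd5 j (fun _ => c) q = 0 := by
  simp [pd5]

lemma pd5_neg (j : Fin 5) (f : Pt5 → ℝ) (q : Pt5) :
    pd5 j (fun r => -f r) q = -pd5 j f q := by
  simp [pd5, fderiv_neg]

lemma pd5_comp_base (f : Pt3 → ℝ) (q : Pt5) (hf : DifferentiableAt ℝ f (base q)) (j : Fin 5) :
    pd5 j (fun r => f (base r)) q = fderiv ℝ f (base q) (base (Pi.single j 1)) := by
  have h1 : (fun r => f (base r)) = f ∘ ⇑baseL := by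
    funext r; simp [Function.comp, baseL_apply]
  rw [pd5, h1, fderiv_comp q (by rwa [baseL_apply]) baseL.differentiableAt]
  simp [ContinuousLinearMap.fderiv, baseL_apply]

lemma base_single0 : base (Pi.single (0 : Fin 5) 1) = Pi.single (0 : Fin 3) 1 := by
  funext i; fin_cases i <;> simp [base]
lemma base_single1 : base (Pi.single (1 : Fin 5) 1) = Pi.single (1 : Fin 3) 1 := by
  funext i; fin_cases i <;> simp [base, Pi.single_apply]
lemma base_single2 : base (Pi.single (2 : Fin 5) 1) = Pi.single (2 : Fin 3) 1 := by
  funext i; fin_cases i <;> simp [base, Pi.single_apply]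
lemma base_single3 : base (Pi.single (3 : Fin 5) 1) = 0 := by
  funext i; fin_cases i <;> simp [base, Pi.single_apply]
lemma base_single4 : base (Pi.single (4 : Fin 5) 1) = 0 := by
  funext i; fin_cases i <;> simp [base, Pi.single_apply]

/-- the five components of pd5 of a pulled-back function. -/
lemma pd5_base (f : Pt3 → ℝ) (q : Pt5) (hf : DifferentiableAt ℝ f (base q)) :
    pd5 0 (fun r => f (base r)) q = pd 0 f (base q)
    ∧ pd5 1 (fun r => f (base r)) q = pd 1 f (base q)
    ∧ pd5 2 (fun r => f (base r)) q = pd 2 f (base q)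
    ∧ pd5 3 (fun r => f (base r)) q = 0
    ∧ pd5 4 (fun r => f (base r)) q = 0 := by
  refine ⟨?_, ?_, ?_, ?_, ?_⟩ <;>
    rw [pd5_comp_base f q hf]
  · rw [base_single0]; rfl
  · rw [base_single1]; rfl
  · rw [base_single2]; rfl
  · rw [base_single3]; simp
  · rw [base_single4]; simp

/-- Quotient rule for `pd`. -/
lemma pd_div (u v : Pt3 → ℝ) (p : Pt3) (hu : DifferentiableAt ℝ u p)
    (hv : DifferentiableAt ℝ v p) (h0 : v p ≠ 0) (j : Fin 3) :
    pd j (fun x => u x / v x) p = (pd j u p * v p - u p * pd j v p) / (v p) ^ 2 := by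
  have h1 : (fun x => u x / v x) = fun x => u x * (v x)⁻¹ := by
    funext x; rw [div_eq_mul_inv]
  have h2 : (fun x : Pt3 => (v x)⁻¹) = (fun y : ℝ => y⁻¹) ∘ v := rfl
  rw [pd, h1, fderiv_fun_mul (d := fun x => (v x)⁻¹) hu (hv.inv h0)]
  have h3 : fderiv ℝ (fun x : Pt3 => (v x)⁻¹) p =
      (fderiv ℝ (fun y : ℝ => y⁻¹) (v p)).comp (fderiv ℝ v p) := by
    rw [h2, fderiv_comp p (differentiableAt_inv h0) hv]
  rw [h3, fderiv_inv]
  simp [pd]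
  field_simp
  ring

/-- `pd i w` is continuously differentiable. -/
lemma pd_contDiff (w : Pt3 → ℝ) (hw : ContDiff ℝ 2 w) (i : Fin 3) :
    ContDiff ℝ 1 (fun p => pd i w p) := by
  have h1 : ContDiff ℝ 1 (fderiv ℝ w) := hw.fderiv_right (by norm_num)
  exact h1.clm_apply contDiff_const

/-- Clairaut symmetry of second partials. -/
lemma pd_symm (w : Pt3 → ℝ) (hw : ContDiff ℝ 2 w) (i j : Fin 3) (p : Pt3) :
    pd i (fun x => pd j w x) p = pd j (fun x => pd i w x) p := by
  have hdw : Differentiable ℝ w := hw.differentiable (by norm_num)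
  have h1 : ContDiff ℝ 1 (fderiv ℝ w) := hw.fderiv_right (by norm_num)
  have h2 : DifferentiableAt ℝ (fderiv ℝ w) p := (h1.differentiable (by norm_num)) p
  have hsym := second_derivative_symmetric (f := w) (f' := fderiv ℝ w)
    (f'' := fderiv ℝ (fderiv ℝ w) p) (x := p)
    (fun y => (hdw y).hasFDerivAt) h2.hasFDerivAt
  have key : ∀ k l : Fin 3, pd k (fun x => pd l w x) p =
      fderiv ℝ (fderiv ℝ w) p (Pi.single k 1) (Pi.single l 1) := by
    intro k l
    have : (fun x => pd l w x) = fun x => (fderiv ℝ w x) (Pi.single l 1) := rfl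
    rw [pd, this, fderiv_clm_apply h2 (differentiableAt_const _)]
    simp
  rw [key i j, key j i, hsym]

/-- sign function for the Jacobi triple. -/
def eps (α β γ : Fin 5) : ℝ :=
  if α = 0 ∧ β = 3 ∧ γ = 4 ∨ α = 3 ∧ β = 4 ∧ γ = 0 ∨ α = 4 ∧ β = 0 ∧ γ = 3 then 1
  else if α = 0 ∧ β = 4 ∧ γ = 3 ∨ α = 4 ∧ β = 3 ∧ γ = 0 ∨ α = 3 ∧ β = 0 ∧ γ = 4 then -1
  else 0

lemma diffAt_div (u v : Pt3 → ℝ) (p : Pt3) (hu : DifferentiableAt ℝ u p)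
    (hv : DifferentiableAt ℝ v p) (h0 : v p ≠ 0) :
    DifferentiableAt ℝ (fun x => u x / v x) p := by
  have h : (fun x => u x / v x) = fun x => u x * (v x)⁻¹ := funext fun x => div_eq_mul_inv _ _
  rw [h]; exact hu.mul (hv.inv h0)

set_option maxHeartbeats 2000000 in
lemma master (w : Pt3 → ℝ) (hw : ContDiff ℝ 2 w) (a b lam : ℝ) (q : Pt5)
    (hq : pd 0 w (base q) ≠ 0) (α β γ : Fin 5) :
    jacobi (fun r => P0 w r + lam • P1 a b) q α β γ * (pd 0 w (base q)) ^ 2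
      = eps α β γ * (-lam) * hirota a b w (base q) := by
  have hdi : ∀ i : Fin 3, DifferentiableAt ℝ (fun p => pd i w p) (base q) :=
    fun i => ((pd_contDiff w hw i).differentiable one_ne_zero) (base q)
  have hF : DifferentiableAt ℝ (fun p => pd 2 w p / pd 0 w p) (base q) :=
    diffAt_div _ _ _ (hdi 2) (hdi 0) hq
  have hG : DifferentiableAt ℝ (fun p => pd 1 w p / pd 0 w p) (base q) :=
    diffAt_div _ _ _ (hdi 1) (hdi 0) hq
  obtain ⟨hF0, hF1, hF2, hF3, hF4⟩ := pd5_base (fun p => pd 2 w p / pd 0 w p) q hF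
  obtain ⟨hG0, hG1, hG2, hG3, hG4⟩ := pd5_base (fun p => pd 1 w p / pd 0 w p) q hG
  have qF : ∀ j : Fin 3, pd j (fun p => pd 2 w p / pd 0 w p) (base q)
      = (pd j (fun p => pd 2 w p) (base q) * pd 0 w (base q)
          - pd 2 w (base q) * pd j (fun p => pd 0 w p) (base q)) / (pd 0 w (base q)) ^ 2 :=
    fun j => pd_div _ _ _ (hdi 2) (hdi 0) hq j
  have qG : ∀ j : Fin 3, pd j (fun p => pd 1 w p / pd 0 w p) (base q)
      = (pd j (fun p => pd 1 w p) (base q) * pd 0 w (base q)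
          - pd 1 w (base q) * pd j (fun p => pd 0 w p) (base q)) / (pd 0 w (base q)) ^ 2 :=
    fun j => pd_div _ _ _ (hdi 1) (hdi 0) hq j
  have s20 : pd 0 (fun x => pd 2 w x) (base q) = pd 2 (fun x => pd 0 w x) (base q) :=
    pd_symm w hw 0 2 _
  have s01 : pd 1 (fun x => pd 0 w x) (base q) = pd 0 (fun x => pd 1 w x) (base q) :=
    pd_symm w hw 1 0 _
  have s12 : pd 2 (fun x => pd 1 w x) (base q) = pd 1 (fun x => pd 2 w x) (base q) :=
    pd_symm w hw 2 1 _
  have hE : (pd 1 w (base q) / pd 0 w (base q) * pd 0 (fun p => pd 2 w p / pd 0 w p) (base q)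
      - pd 2 w (base q) / pd 0 w (base q) * pd 0 (fun p => pd 1 w p / pd 0 w p) (base q)
      - (1 + lam * b) * pd 1 (fun p => pd 2 w p / pd 0 w p) (base q)
      + (1 + lam * a) * pd 2 (fun p => pd 1 w p / pd 0 w p) (base q)) * (pd 0 w (base q)) ^ 2
      = -lam * hirota a b w (base q) := by
    rw [qF 0, qF 1, qG 0, qG 2, s20, s01, s12, hirota]
    field_simp
    ring
  fin_cases α <;> fin_cases β <;> fin_cases γ
  all_goals simp only [jacobi, Fin.sum_univ_five]
  all_goals simp [P0, P1, pd5_const, pd5_neg, hF0, hF1, hF2, hF3, hF4, hG0, hG1,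
      hG2, hG3, hG4, eps, Matrix.vecHead, Matrix.vecTail]
  all_goals first
      | ring1
      | linear_combination hE
      | linear_combination -hE

theorem stmt10 (w : Pt3 → ℝ) (hw : ContDiff ℝ 2 w) (a b : ℝ)
    (ha : a ≠ 0) (hb : b ≠ 0) (hab : a ≠ b)
    (B : Set Pt3) (hB : IsOpen B) (hwx : ∀ p ∈ B, pd 0 w p ≠ 0) :
    (∀ lam : ℝ, ∀ q : Pt5, base q ∈ B → ∀ α β γ : Fin 5,
        jacobi (fun r => P0 w r + lam • P1 a b) q α β γ = 0) ↔
      (∀ p ∈ B, hirota a b w p = 0) := by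
  constructor
  · intro h p hp
    set q : Pt5 := ![p 0, p 1, p 2, 0, 0] with hqdef
    have hbq : base q = p := by
      funext i; fin_cases i <;> simp [base, hqdef]
    have hq : pd 0 w (base q) ≠ 0 := by rw [hbq]; exact hwx p hp
    have hm := master w hw a b 1 q hq 0 3 4
    rw [h 1 q (by rw [hbq]; exact hp) 0 3 4] at hm
    rw [hbq] at hm
    simp [eps] at hm
    linarith
  · intro h lam q hq α β γ
    have hx := hwx _ hq
    have hm := master w hw a b lam q hx α β γ
    rw [h _ hq, mul_zero] at hm
    exact (mul_eq_zero.mp hm).resolve_right (pow_ne_zero 2 hx)
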